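/- Let 𝔤 be a finite-dimensional complex Lie algebra, let 𝔫 = ⊕_{i=1}^{N} 𝔫(i) ⊆ 𝔤 be a finite-dimensional graded nilpotent subalgebra with [𝔫(i), 𝔫(j)] ⊆ 𝔫(i+j) (and 𝔫(i) = 0 for i > N), and let x ∈ 𝔤 be an element such that [𝔫(i), x] ⊆ ⊕_{j ≥ i} 𝔫(j) for all i, and such that for each i the composite map 𝔫(i) → ⊕_{j≥i} 𝔫(j) → 𝔫(i), y ↦ (component of [y,x] in 𝔫(i)), is a linear isomorphism. Then the map φ : 𝔫 → 𝔫 defined by φ(y) = e^{ad(y)}(x) − x is a bijection. -/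

import Mathlib

open scoped BigOperators

/-- Let `𝔤` be a finite-dimensional complex Lie algebra, `𝔫 = ⊕_{i=1}^N 𝔫(i)`
a graded nilpotent subalgebra (`n 0 = ⊥`, `n i = ⊥` for `i > N`,
`[𝔫(i),𝔫(j)] ⊆ 𝔫(i+j)`, with projections `p i` onto the graded pieces), and
`x ∈ 𝔤` with `[𝔫(i), x] ⊆ ⊕_{j ≥ i} 𝔫(j)` such that for each `1 ≤ i ≤ N` the
map `𝔫(i) → 𝔫(i)`, `y ↦ (component of [y,x] in 𝔫(i))`, is a linear
isomorphism. Then `φ : 𝔫 → 𝔫`, `φ(y) = e^{ad(y)}(x) − x`, is a bijection. -/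
theorem stmt17 (𝔤 : Type*) [LieRing 𝔤] [LieAlgebra ℂ 𝔤] [Module.Finite ℂ 𝔤]
    (Nn : ℕ) (n : ℕ → Submodule ℂ 𝔤) (p : ℕ → (𝔤 →ₗ[ℂ] 𝔤))
    (hn0 : n 0 = ⊥) (hnN : ∀ i, Nn < i → n i = ⊥)
    (hbracket : ∀ i j, ∀ y ∈ n i, ∀ z ∈ n j, ⁅y, z⁆ ∈ n (i + j))
    (hproj_id : ∀ i, ∀ z ∈ n i, p i z = z)
    (hproj_zero : ∀ i j, i ≠ j → ∀ z ∈ n j, p i z = 0)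
    (x : 𝔤)
    (hx : ∀ i, ∀ y ∈ n i, ⁅y, x⁆ ∈ ⨆ j ∈ Set.Ici i, n j)
    (hiso : ∀ i, 1 ≤ i → i ≤ Nn →
      Set.BijOn (fun y => p i ⁅y, x⁆) (n i : Set 𝔤) (n i : Set 𝔤)) :
    Set.BijOn
      (fun y : 𝔤 => ∑ k ∈ Finset.range (Nn + 1),
        (((k + 1).factorial : ℂ))⁻¹ • (((LieAlgebra.ad ℂ 𝔤 y) ^ (k + 1)) x))
      ((⨆ i ∈ Finset.Icc 1 Nn, n i : Submodule ℂ 𝔤) : Set 𝔤)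
      ((⨆ i ∈ Finset.Icc 1 Nn, n i : Submodule ℂ 𝔤) : Set 𝔤) := by
  classical
  set φ : 𝔤 → 𝔤 := fun y : 𝔤 => ∑ k ∈ Finset.range (Nn + 1),
      (((k + 1).factorial : ℂ))⁻¹ • (((LieAlgebra.ad ℂ 𝔤 y) ^ (k + 1)) x) with hφ
  set F : ℕ → Submodule ℂ 𝔤 := fun i => ⨆ j ∈ Set.Ici i, n j with hFdef
  have hnF : ∀ i j, i ≤ j → n j ≤ F i := fun i j hij => le_iSup₂_of_le j hij le_rfl
  have hFanti : ∀ i j, i ≤ j → F j ≤ F i := by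
    intro i j hij
    exact iSup₂_le fun l hl => hnF i l (le_trans hij hl)
  have hFind : ∀ (i : ℕ) (motive : 𝔤 → Prop), motive 0 →
      (∀ a b, motive a → motive b → motive (a + b)) →
      (∀ j, i ≤ j → ∀ z ∈ n j, motive z) →
      ∀ z ∈ F i, motive z := by
    intro i motive h0 hadd hmem z hz
    refine Submodule.iSup_induction (motive := motive)
      (fun j => ⨆ (_ : j ∈ Set.Ici i), n j) hz ?_ h0 hadd
    intro j w hw
    have hw' : w ∈ ⨆ (_ : j ∈ Set.Ici i), n j := hw
    by_cases hij : j ∈ Set.Ici i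
    · rw [iSup_pos hij] at hw'
      exact hmem j hij w hw'
    · rw [iSup_neg hij] at hw'
      simp only [Submodule.mem_bot] at hw'
      simpa [hw'] using h0
  have hFtop : ∀ i, Nn < i → F i = ⊥ := by
    intro i hi
    refine le_bot_iff.mp (iSup₂_le fun j hj => ?_)
    rw [hnN j (lt_of_lt_of_le hi hj)]
  have hM : (⨆ i ∈ Finset.Icc 1 Nn, n i : Submodule ℂ 𝔤) = F 1 := by
    refine le_antisymm (iSup₂_le fun j hj => hnF 1 j (Finset.mem_Icc.mp hj).1) ?_
    refine iSup₂_le fun j hj => ?_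
    by_cases hjN : j ≤ Nn
    · exact le_iSup₂_of_le j (Finset.mem_Icc.mpr ⟨hj, hjN⟩) le_rfl
    · rw [hnN j (by omega)]; exact bot_le
  have hbrF : ∀ a b (y : 𝔤), y ∈ F a → ∀ z ∈ F b, ⁅y, z⁆ ∈ F (a + b) := by
    intro a b
    refine hFind a (fun y => ∀ z ∈ F b, ⁅y, z⁆ ∈ F (a + b)) ?_ ?_ ?_
    · intro z _; simp only [zero_lie]; exact zero_mem _
    · intro u v hu hv z hz
      rw [add_lie]; exact add_mem (hu z hz) (hv z hz)
    · intro i hi y hy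
      refine hFind b (fun z => ⁅y, z⁆ ∈ F (a + b)) ?_ ?_ ?_
      · simp only [lie_zero]; exact zero_mem _
      · intro u v hu hv; rw [lie_add]; exact add_mem hu hv
      · intro j hj z hz
        exact hnF (a + b) (i + j) (by omega) (hbracket i j y hy z hz)
  have hxF : ∀ i (y : 𝔤), y ∈ F i → ⁅y, x⁆ ∈ F i := by
    intro i
    refine hFind i (fun y => ⁅y, x⁆ ∈ F i) ?_ ?_ ?_
    · simp only [zero_lie]; exact zero_mem _
    · intro u v hu hv; rw [add_lie]; exact add_mem hu hv
    · intro j hj y hy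
      exact hFanti i j hj (hx j y hy)
  have hadpow : ∀ (m a : ℕ) (y : 𝔤), y ∈ F 1 → ∀ v ∈ F a,
      ((LieAlgebra.ad ℂ 𝔤 y) ^ m) v ∈ F (a + m) := by
    intro m
    induction m with
    | zero => intro a y _ v hv; simpa using hv
    | succ m ih =>
      intro a y hy v hv
      rw [pow_succ', Module.End.mul_apply]
      have h1 : (LieAlgebra.ad ℂ 𝔤 y) (((LieAlgebra.ad ℂ 𝔤 y) ^ m) v) ∈ F (1 + (a + m)) := by
        exact hbrF 1 (a + m) y hy _ (ih a y hy v hv)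
      rw [show a + (m + 1) = 1 + (a + m) by omega]
      exact h1
  have hadpowx : ∀ (k : ℕ) (y : 𝔤), y ∈ F 1 →
      ((LieAlgebra.ad ℂ 𝔤 y) ^ (k + 1)) x ∈ F (k + 1) := by
    intro k y hy
    rw [pow_succ, Module.End.mul_apply]
    have : (LieAlgebra.ad ℂ 𝔤 y) x = ⁅y, x⁆ := rfl
    rw [this]
    rw [show k + 1 = 1 + k by omega]
    exact hadpow k 1 y hy _ (hxF 1 y hy)
  have hmaps : ∀ y ∈ F 1, φ y ∈ F 1 := by
    intro y hy
    refine Submodule.sum_mem _ fun k _ => Submodule.smul_mem _ _ ?_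
    exact hFanti 1 (k + 1) (by omega) (hadpowx k y hy)
  have hdiffpow : ∀ (i : ℕ) (y y' : 𝔤), y ∈ F 1 → y' ∈ F 1 → y - y' ∈ F i →
      ∀ m, ((LieAlgebra.ad ℂ 𝔤 y) ^ (m + 1)) x - ((LieAlgebra.ad ℂ 𝔤 y') ^ (m + 1)) x
        ∈ F (i + m) := by
    intro i y y' hy hy' hd m
    induction m with
    | zero =>
      have h01 : ((LieAlgebra.ad ℂ 𝔤 y) ^ (0 + 1)) x - ((LieAlgebra.ad ℂ 𝔤 y') ^ (0 + 1)) x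
          = ⁅y - y', x⁆ := by
        simp only [zero_add, pow_one, LieAlgebra.ad_apply, sub_lie]
      rw [h01]
      simpa using hxF i _ hd
    | succ m ih =>
      have hA := hadpowx m y hy
      have hB := hadpowx m y' hy'
      set A := ((LieAlgebra.ad ℂ 𝔤 y) ^ (m + 1)) x with hAdef
      set B := ((LieAlgebra.ad ℂ 𝔤 y') ^ (m + 1)) x with hBdef
      have e1 : ((LieAlgebra.ad ℂ 𝔤 y) ^ (m + 1 + 1)) x = ⁅y, A⁆ := by
        rw [pow_succ', Module.End.mul_apply]; rfl
      have e2 : ((LieAlgebra.ad ℂ 𝔤 y') ^ (m + 1 + 1)) x = ⁅y', B⁆ := by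
        rw [pow_succ', Module.End.mul_apply]; rfl
      rw [e1, e2]
      have e3 : ⁅y, A⁆ - ⁅y', B⁆ = ⁅y, A - B⁆ + ⁅y - y', B⁆ := by
        rw [lie_sub, sub_lie]; abel
      rw [e3]
      refine add_mem ?_ ?_
      · have := hbrF 1 (i + m) y hy _ ih
        exact hFanti (i + (m + 1)) (1 + (i + m)) (by omega) this
      · have := hbrF i (m + 1) _ hd B hB
        exact hFanti (i + (m + 1)) (i + (m + 1)) le_rfl this
  have hkey : ∀ (i : ℕ) (y y' : 𝔤), y ∈ F 1 → y' ∈ F 1 → y - y' ∈ F i →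
      (φ y - φ y') - ⁅y - y', x⁆ ∈ F (i + 1) := by
    intro i y y' hy hy' hd
    have e0 : φ y - φ y' = ∑ k ∈ Finset.range (Nn + 1),
        (((k + 1).factorial : ℂ))⁻¹ •
          (((LieAlgebra.ad ℂ 𝔤 y) ^ (k + 1)) x - ((LieAlgebra.ad ℂ 𝔤 y') ^ (k + 1)) x) := by
      simp only [hφ]
      rw [← Finset.sum_sub_distrib]
      exact Finset.sum_congr rfl fun k _ => (smul_sub _ _ _).symm
    have e1 : φ y - φ y' - ⁅y - y', x⁆ = ∑ k ∈ Finset.range Nn,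
        (((k + 1 + 1).factorial : ℂ))⁻¹ •
          (((LieAlgebra.ad ℂ 𝔤 y) ^ (k + 1 + 1)) x - ((LieAlgebra.ad ℂ 𝔤 y') ^ (k + 1 + 1)) x) := by
      rw [e0, Finset.sum_range_succ']
      have hf : (((0 + 1).factorial : ℂ)) = 1 := by norm_num [Nat.factorial]
      have : (((0 + 1).factorial : ℂ))⁻¹ •
          (((LieAlgebra.ad ℂ 𝔤 y) ^ (0 + 1)) x - ((LieAlgebra.ad ℂ 𝔤 y') ^ (0 + 1)) x)
          = ⁅y - y', x⁆ := by
        rw [hf, inv_one, one_smul]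
        simp only [zero_add, pow_one, LieAlgebra.ad_apply, sub_lie]
      rw [this]
      abel
    rw [e1]
    refine Submodule.sum_mem _ fun k _ => Submodule.smul_mem _ _ ?_
    have := hdiffpow i y y' hy hy' hd (k + 1)
    exact hFanti (i + 1) (i + (k + 1)) (by omega) this
  -- projection lemmas
  have hpA : ∀ (i : ℕ) (z : 𝔤), z ∈ F i → p i z ∈ n i ∧ z - p i z ∈ F (i + 1) := by
    intro i
    refine hFind i (fun z => p i z ∈ n i ∧ z - p i z ∈ F (i + 1)) ?_ ?_ ?_
    · simp only [map_zero, sub_zero]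
      exact ⟨zero_mem _, zero_mem _⟩
    · intro a b ha hb
      refine ⟨by rw [map_add]; exact add_mem ha.1 hb.1, ?_⟩
      have : a + b - p i (a + b) = (a - p i a) + (b - p i b) := by rw [map_add]; abel
      rw [this]; exact add_mem ha.2 hb.2
    · intro j hj z hz
      rcases eq_or_lt_of_le hj with h | h
      · subst h
        rw [hproj_id i z hz]
        exact ⟨hz, by simpa using zero_mem (F (i + 1))⟩
      · rw [hproj_zero i j (by omega) z hz]
        exact ⟨zero_mem _, by simpa using hnF (i + 1) j (by omega) hz⟩
  have hpB : ∀ (i j : ℕ), j < i → ∀ z ∈ F i, p j z = 0 := by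
    intro i j hji
    refine hFind i (fun z => p j z = 0) (map_zero _) ?_ ?_
    · intro a b ha hb; rw [map_add, ha, hb, add_zero]
    · intro l hl z hz
      exact hproj_zero j l (by omega) z hz
  -- φ 0 = 0
  have hφ0 : φ 0 = 0 := by
    simp only [hφ]
    refine Finset.sum_eq_zero fun k _ => ?_
    have hz0 : (LieAlgebra.ad ℂ 𝔤) (0 : 𝔤) = 0 := (LieAlgebra.ad ℂ 𝔤).map_zero
    rw [hz0, zero_pow (Nat.succ_ne_zero k)]
    simp
  -- injectivity
  have hinj : ∀ y ∈ F 1, ∀ y' ∈ F 1, φ y = φ y' → y = y' := by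
    intro y hy y' hy' heq
    have hdmem : ∀ i, y - y' ∈ F (i + 1) := by
      intro i
      induction i with
      | zero => exact sub_mem hy hy'
      | succ i ih =>
        by_cases hN : Nn < i + 1
        · rw [hFtop (i + 1) hN, Submodule.mem_bot] at ih
          rw [ih]; exact zero_mem _
        · have h1 : (1 : ℕ) ≤ i + 1 := by omega
          have h2 : i + 1 ≤ Nn := by omega
          have hk := hkey (i + 1) y y' hy hy' ih
          rw [heq, sub_self, zero_sub] at hk
          have hlie : ⁅y - y', x⁆ ∈ F (i + 1 + 1) := by
            have := neg_mem hk
            simpa using this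
          obtain ⟨he, hde⟩ := hpA (i + 1) (y - y') ih
          have hpl : p (i + 1) ⁅p (i + 1) (y - y'), x⁆ = 0 := by
            have eq1 : ⁅p (i + 1) (y - y'), x⁆
                = ⁅y - y', x⁆ - ⁅(y - y') - p (i + 1) (y - y'), x⁆ := by
              rw [← sub_lie, sub_sub_cancel]
            rw [eq1, map_sub, hpB (i + 1 + 1) (i + 1) (by omega) _ hlie,
              hpB (i + 1 + 1) (i + 1) (by omega) _ (hxF (i + 1 + 1) _ hde)]
            simp
          have hz0 : p (i + 1) (y - y') = 0 := by
            have hinj' := (hiso (i + 1) h1 h2).2.1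
            have h0mem : (0 : 𝔤) ∈ (n (i + 1) : Set 𝔤) := zero_mem _
            have : p (i + 1) ⁅(0 : 𝔤), x⁆ = 0 := by simp
            exact hinj' he h0mem (by simpa [this] using hpl)
          have := hde
          rw [hz0, sub_zero] at this
          exact this
    have := hdmem Nn
    rw [hFtop (Nn + 1) (by omega), Submodule.mem_bot, sub_eq_zero] at this
    exact this
  -- surjectivity
  have hsurj : ∀ z ∈ F 1, ∃ y ∈ F 1, φ y = z := by
    intro z hz
    have hstep : ∀ i, ∃ y ∈ F 1, z - φ y ∈ F (i + 1) := by
      intro i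
      induction i with
      | zero => exact ⟨0, zero_mem _, by rwa [hφ0, sub_zero]⟩
      | succ i ih =>
        obtain ⟨y, hy, hzy⟩ := ih
        by_cases hN : Nn < i + 1
        · refine ⟨y, hy, ?_⟩
          rw [hFtop (i + 1) hN, Submodule.mem_bot] at hzy
          rw [hzy]; exact zero_mem _
        · have h1 : (1 : ℕ) ≤ i + 1 := by omega
          have h2 : i + 1 ≤ Nn := by omega
          obtain ⟨hw, _⟩ := hpA (i + 1) (z - φ y) hzy
          obtain ⟨u, hu, hux⟩ := (hiso (i + 1) h1 h2).2.2 hw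
          have hu' : u ∈ (n (i + 1) : Submodule ℂ 𝔤) := hu
          have huF : u ∈ F (i + 1) := hnF (i + 1) (i + 1) le_rfl hu'
          have huF1 : u ∈ F 1 := hFanti 1 (i + 1) h1 huF
          refine ⟨y + u, add_mem hy huF1, ?_⟩
          have hsub : (y + u) - y = u := by abel
          have hk := hkey (i + 1) (y + u) y (add_mem hy huF1) hy (by rwa [hsub])
          rw [hsub] at hk
          have hv : (z - φ y) - ⁅u, x⁆ ∈ F (i + 1) :=
            sub_mem hzy (hxF (i + 1) u huF)
          have hpv : p (i + 1) ((z - φ y) - ⁅u, x⁆) = 0 := by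
            have hux' : p (i + 1) ⁅u, x⁆ = p (i + 1) (z - φ y) := hux
            rw [map_sub, hux', sub_self]
          have hvF : (z - φ y) - ⁅u, x⁆ ∈ F (i + 1 + 1) := by
            obtain ⟨_, hde⟩ := hpA (i + 1) _ hv
            rwa [hpv, sub_zero] at hde
          have e : z - φ (y + u) = ((z - φ y) - ⁅u, x⁆) - ((φ (y + u) - φ y) - ⁅u, x⁆) := by
            abel
          rw [e]
          exact sub_mem hvF hk
    obtain ⟨y, hy, h⟩ := hstep Nn
    rw [hFtop (Nn + 1) (by omega), Submodule.mem_bot, sub_eq_zero] at h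
    exact ⟨y, hy, h.symm⟩
  rw [hM]
  refine ⟨fun y hy => hmaps y hy, fun y hy y' hy' h => hinj y hy y' hy' h, ?_⟩
  intro z hz
  obtain ⟨y, hy, h⟩ := hsurj z hz
  exact ⟨y, hy, h⟩
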